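/- Let F be a finite field, m a positive integer, R = Matrix (Fin m) (Fin m) F, and let χ be a generating character of R. Then for all B, B' ∈ R: rank(B) = rank(B') if and only if for every j with 0 ≤ j ≤ m, ∑_{A ∈ R, rank(A) = j} χ(A*B) = ∑_{A ∈ R, rank(A) = j} χ(A*B'). (Equivalently, the homogeneous weight partition of R, which coincides with the rank partition, is self-dual with respect to character-theoretic dualization.) -/

import Mathlib

open Matrix Module Finset

namespace RankDual

variable {F : Type*} [Field F] {m : ℕ}

lemma exists_adapted_bases (f : (Fin m → F) →ₗ[F] (Fin m → F)) {r : ℕ}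
    (hr : finrank F (LinearMap.range f) = r) :
    ∃ (B C : Basis (Fin r ⊕ Fin (m - r)) F (Fin m → F)),
      (∀ i, f (B (Sum.inl i)) = C (Sum.inl i)) ∧ ∀ k, f (B (Sum.inr k)) = 0 := by
  classical
  have hdim : finrank F (Fin m → F) = m := Module.finrank_fin_fun F
  have hrank := LinearMap.finrank_range_add_finrank_ker f
  rw [hdim, hr] at hrank
  have hker : finrank F (LinearMap.ker f) = m - r := by omega
  obtain ⟨p, hp⟩ := Submodule.exists_isCompl (LinearMap.ker f)
  have hpr : finrank F p = r := by
    have h2 := Submodule.finrank_add_eq_of_isCompl hp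
    rw [hdim, hker] at h2; omega
  let bp : Basis (Fin r) F p := finBasisOfFinrankEq F p hpr
  let bk : Basis (Fin (m - r)) F (LinearMap.ker f) :=
    finBasisOfFinrankEq F (LinearMap.ker f) hker
  let B : Basis (Fin r ⊕ Fin (m - r)) F (Fin m → F) :=
    (bp.prod bk).map (Submodule.prodEquivOfIsCompl p (LinearMap.ker f) hp.symm)
  have hBinl : ∀ i, B (Sum.inl i) = (bp i : Fin m → F) := by
    intro i
    show Submodule.prodEquivOfIsCompl p (LinearMap.ker f) hp.symm ((bp.prod bk) (Sum.inl i)) = _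
    rw [Submodule.coe_prodEquivOfIsCompl', Basis.prod_apply_inl_fst, Basis.prod_apply_inl_snd]
    simp
  have hBinr : ∀ k, B (Sum.inr k) = (bk k : Fin m → F) := by
    intro k
    show Submodule.prodEquivOfIsCompl p (LinearMap.ker f) hp.symm ((bp.prod bk) (Sum.inr k)) = _
    rw [Submodule.coe_prodEquivOfIsCompl', Basis.prod_apply_inr_fst, Basis.prod_apply_inr_snd]
    simp
  -- range side
  let fp : p →ₗ[F] (Fin m → F) := f.comp p.subtype
  have hinj : Function.Injective fp := by
    rw [← LinearMap.ker_eq_bot, LinearMap.ker_eq_bot']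
    intro x hx
    have hx1 : (x : Fin m → F) ∈ LinearMap.ker f := hx
    exact Subtype.ext (Submodule.disjoint_def.mp hp.disjoint _ hx1 x.2)
  have hrange : LinearMap.range fp = LinearMap.range f := by
    have h1 : LinearMap.range fp = Submodule.map f p := by
      rw [LinearMap.range_comp, Submodule.range_subtype]
    have h2 : Submodule.map f (LinearMap.ker f) = ⊥ := by
      refine le_antisymm ?_ bot_le
      rintro _ ⟨y, hy, rfl⟩
      simpa using hy
    rw [h1, ← Submodule.map_top, ← hp.sup_eq_top, Submodule.map_sup, h2, bot_sup_eq]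
  let eR : p ≃ₗ[F] LinearMap.range f :=
    (LinearEquiv.ofInjective fp hinj).trans (LinearEquiv.ofEq _ _ hrange)
  let brange : Basis (Fin r) F (LinearMap.range f) := bp.map eR
  have hbrange : ∀ i, (brange i : Fin m → F) = f (bp i) := by
    intro i
    show ((eR (bp i) : LinearMap.range f) : Fin m → F) = _
    show ((LinearEquiv.ofInjective fp hinj (bp i) : LinearMap.range fp) : Fin m → F) = _
    rw [LinearEquiv.ofInjective_apply]
    rfl
  obtain ⟨q, hq⟩ := Submodule.exists_isCompl (LinearMap.range f)
  have hqr : finrank F q = m - r := by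
    have h2 := Submodule.finrank_add_eq_of_isCompl hq
    rw [hdim, hr] at h2; omega
  let bq : Basis (Fin (m - r)) F q := finBasisOfFinrankEq F q hqr
  let C : Basis (Fin r ⊕ Fin (m - r)) F (Fin m → F) :=
    (brange.prod bq).map (Submodule.prodEquivOfIsCompl (LinearMap.range f) q hq)
  have hCinl : ∀ i, C (Sum.inl i) = (brange i : Fin m → F) := by
    intro i
    show Submodule.prodEquivOfIsCompl (LinearMap.range f) q hq
      ((brange.prod bq) (Sum.inl i)) = _
    rw [Submodule.coe_prodEquivOfIsCompl', Basis.prod_apply_inl_fst, Basis.prod_apply_inl_snd]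
    simp
  refine ⟨B, C, fun i => ?_, fun k => ?_⟩
  · rw [hBinl, hCinl, hbrange]
  · rw [hBinr]
    exact (bk k).2

lemma exists_units_eq (X Y : Matrix (Fin m) (Fin m) F) (h : X.rank = Y.rank) :
    ∃ U V : (Matrix (Fin m) (Fin m) F)ˣ, Y = (U : Matrix (Fin m) (Fin m) F) * X * (V : Matrix (Fin m) (Fin m) F) := by
  classical
  have hX : finrank F (LinearMap.range X.mulVecLin) = X.rank := rfl
  have hY : finrank F (LinearMap.range Y.mulVecLin) = X.rank := h ▸ rfl
  obtain ⟨BX, CX, hX1, hX2⟩ := exists_adapted_bases X.mulVecLin hX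
  obtain ⟨BY, CY, hY1, hY2⟩ := exists_adapted_bases Y.mulVecLin hY
  let a : (Fin m → F) ≃ₗ[F] (Fin m → F) := BY.equiv BX (Equiv.refl _)
  let b : (Fin m → F) ≃ₗ[F] (Fin m → F) := CX.equiv CY (Equiv.refl _)
  have key : Y.mulVecLin = b.toLinearMap ∘ₗ X.mulVecLin ∘ₗ a.toLinearMap := by
    apply BY.ext
    intro i
    have ha : ∀ j, a (BY j) = BX j := fun j => by simp [a, Basis.equiv_apply]
    have hb : ∀ j, b (CX j) = CY j := fun j => by simp [b, Basis.equiv_apply]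
    cases i with
    | inl i =>
        simp only [LinearMap.comp_apply, LinearEquiv.coe_coe, ha, hX1, hb, hY1]
    | inr k =>
        simp only [LinearMap.comp_apply, LinearEquiv.coe_coe, ha, hX2, hY2, map_zero]
  let U : (Matrix (Fin m) (Fin m) F)ˣ :=
    ⟨LinearMap.toMatrix' b.toLinearMap, LinearMap.toMatrix' b.symm.toLinearMap,
      by rw [← LinearMap.toMatrix'_comp]; simp,
      by rw [← LinearMap.toMatrix'_comp]; simp⟩
  let V : (Matrix (Fin m) (Fin m) F)ˣ :=
    ⟨LinearMap.toMatrix' a.toLinearMap, LinearMap.toMatrix' a.symm.toLinearMap,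
      by rw [← LinearMap.toMatrix'_comp]; simp,
      by rw [← LinearMap.toMatrix'_comp]; simp⟩
  refine ⟨U, V, ?_⟩
  apply Matrix.toLin'.injective
  show Matrix.toLin' Y = Matrix.toLin' ((U : Matrix (Fin m) (Fin m) F) * X * (V : Matrix (Fin m) (Fin m) F))
  rw [Matrix.toLin'_mul, Matrix.toLin'_mul]
  show Y.mulVecLin = (Matrix.toLin' (LinearMap.toMatrix' b.toLinearMap)).comp
    (X.mulVecLin.comp (Matrix.toLin' (LinearMap.toMatrix' a.toLinearMap)))
  rw [Matrix.toLin'_toMatrix', Matrix.toLin'_toMatrix']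
  exact key



variable (F : Type*) [Field F] [Fintype F]

noncomputable def φF : AddChar F ℂ := AddChar.FiniteField.primitiveChar_to_Complex F

lemma φF_prim : (φF F).IsPrimitive :=
  AddChar.FiniteField.primitiveChar_to_Complex_isPrimitive F

variable {F}

lemma φF_map_sum {ι : Type*} (s : Finset ι) (g : ι → F) :
    φF F (∑ i ∈ s, g i) = ∏ i ∈ s, φF F (g i) := by
  classical
  induction s using Finset.induction_on with
  | empty => simp
  | insert _ _ h ih => rw [Finset.sum_insert h, Finset.prod_insert h, AddChar.map_add_eq_mul, ih]

open scoped Classical in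
lemma sum_mulShift (c : F) :
    ∑ t : F, φF F (t * c) = if c = 0 then (Fintype.card F : ℂ) else 0 := by
  split_ifs with hc
  · subst hc; simp
  · have hnt := φF_prim F hc
    rw [AddChar.ne_one_iff] at hnt
    obtain ⟨a, ha⟩ := hnt
    rw [AddChar.mulShift_apply] at ha
    have key : φF F (c * a) * ∑ t : F, φF F (t * c) = ∑ t : F, φF F (t * c) := by
      rw [Finset.mul_sum]
      rw [← Fintype.sum_equiv (Equiv.addLeft a) _ (fun t => φF F (t * c))]
      intro t
      rw [← AddChar.map_add_eq_mul]
      congr 1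
      show c * a + t * c = (a + t) * c
      ring
    have h2 : (φF F (c * a) - 1) * ∑ t : F, φF F (t * c) = 0 := by
      rw [sub_mul, one_mul, key, sub_self]
    rcases mul_eq_zero.mp h2 with h | h
    · exact absurd (by linear_combination h) ha
    · exact h



lemma trace_eq_sum_prod (X D : Matrix (Fin m) (Fin m) F) :
    (X * D).trace = ∑ p : Fin m × Fin m, X p.1 p.2 * D p.2 p.1 := by
  rw [Matrix.trace, Fintype.sum_prod_type]
  simp [Matrix.diag, Matrix.mul_apply]

open scoped Classical in
lemma orthogonality (D : Matrix (Fin m) (Fin m) F) :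
    ∑ X : Matrix (Fin m) (Fin m) F, φF F ((X * D).trace)
      = if D = 0 then ((Fintype.card F : ℂ)) ^ (m * m) else 0 := by
  classical
  have step1 : ∀ X : Matrix (Fin m) (Fin m) F,
      φF F ((X * D).trace) = ∏ p : Fin m × Fin m, φF F (X p.1 p.2 * D p.2 p.1) := by
    intro X
    rw [trace_eq_sum_prod, φF_map_sum]
  simp only [step1]
  let me : (Fin m × Fin m → F) ≃ Matrix (Fin m) (Fin m) F :=
    (Equiv.curry _ _ _).trans Matrix.of
  rw [← Equiv.sum_comp me (fun X => ∏ p : Fin m × Fin m, φF F (X p.1 p.2 * D p.2 p.1))]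
  have hme : ∀ (g : Fin m × Fin m → F) (p : Fin m × Fin m), me g p.1 p.2 = g p := by
    intro g p; rfl
  simp only [hme]
  have hps := Fintype.prod_sum (fun (p : Fin m × Fin m) (t : F) => φF F (t * D p.2 p.1))
  rw [← hps]
  by_cases hD : D = 0
  · subst hD
    simp only [if_pos rfl, Matrix.zero_apply, sum_mulShift, if_pos rfl, Finset.prod_const,
      Finset.card_univ, Fintype.card_prod, Fintype.card_fin, if_true]
  · rw [if_neg hD]
    have : ∃ a b, D a b ≠ 0 := by
      by_contra hc
      push_neg at hc
      exact hD (by ext a b; simpa using hc a b)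
    obtain ⟨a, b, hab⟩ := this
    apply Finset.prod_eq_zero (Finset.mem_univ (b, a))
    rw [sum_mulShift, if_neg hab]




noncomputable def φu (F : Type*) [Field F] [Fintype F] : AddChar F ℂˣ where
  toFun t := ((φF F).val_isUnit t).unit
  map_zero_eq_one' := Units.ext <| by simp
  map_add_eq_mul' a b := Units.ext <| by simp [AddChar.map_add_eq_mul]

lemma φu_coe (t : F) : ((φu F t : ℂˣ) : ℂ) = φF F t := IsUnit.unit_spec _

def traceHom (M : Matrix (Fin m) (Fin m) F) : Matrix (Fin m) (Fin m) F →+ F where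
  toFun X := (X * M).trace
  map_zero' := by simp
  map_add' X Y := by simp [Matrix.add_mul]

noncomputable def ψM (M : Matrix (Fin m) (Fin m) F) :
    AddChar (Matrix (Fin m) (Fin m) F) ℂˣ :=
  (φu F).compAddMonoidHom (traceHom M)

lemma ψM_coe (M X : Matrix (Fin m) (Fin m) F) :
    ((ψM M X : ℂˣ) : ℂ) = φF F ((X * M).trace) := by
  rw [ψM, AddChar.compAddMonoidHom_apply]
  exact φu_coe _

lemma φF_prim' : (φF F).IsPrimitive :=
  AddChar.FiniteField.primitiveChar_to_Complex_isPrimitive F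

lemma φF_ne_zero (t : F) : φF F t ≠ 0 := ((φF F).val_isUnit t).ne_zero

lemma trace_eq_sum_prod' (X D : Matrix (Fin m) (Fin m) F) :
    (X * D).trace = ∑ p : Fin m × Fin m, X p.1 p.2 * D p.2 p.1 := by
  rw [Matrix.trace, Fintype.sum_prod_type]
  simp [Matrix.diag, Matrix.mul_apply]

lemma ND (D : Matrix (Fin m) (Fin m) F)
    (h : ∀ X : Matrix (Fin m) (Fin m) F, φF F ((X * D).trace) = 1) : D = 0 := by
  classical
  by_contra hD
  have : ∃ a b, D a b ≠ 0 := by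
    by_contra hc
    push_neg at hc
    exact hD (by ext a b; simpa using hc a b)
  obtain ⟨a, b, hab⟩ := this
  have hnt := φF_prim' (F := F) hab
  rw [AddChar.ne_one_iff] at hnt
  obtain ⟨t, ht⟩ := hnt
  rw [AddChar.mulShift_apply] at ht
  apply ht
  have htr : ((Matrix.single b a t) * D).trace = t * D a b := by
    rw [trace_eq_sum_prod']
    rw [Finset.sum_eq_single (b, a)]
    · simp [Matrix.single]
    · intro p _ hp
      have : ¬(b = p.1 ∧ a = p.2) := by
        rintro ⟨h1, h2⟩
        exact hp (Prod.ext h1.symm h2.symm)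
      simp [Matrix.single, this]
    · simp
  have := h (Matrix.single b a t)
  rw [htr] at this
  rw [mul_comm] at this
  exact this


end RankDual
section Main

open RankDual

theorem rank_partition_self_dual
    {F : Type*} [Field F] [Fintype F] (m : ℕ) (hm : 0 < m)
    (χ : AddChar (Matrix (Fin m) (Fin m) F) ℂˣ)
    (hχ : ∀ ψ : AddChar (Matrix (Fin m) (Fin m) F) ℂˣ,
      ∃ M : Matrix (Fin m) (Fin m) F, ∀ X : Matrix (Fin m) (Fin m) F, ψ X = χ (X * M))
    (B B' : Matrix (Fin m) (Fin m) F) :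
    B.rank = B'.rank ↔
      ∀ j : ℕ, j ≤ m →
        ∑ A ∈ (Set.toFinite {A : Matrix (Fin m) (Fin m) F | A.rank = j}).toFinset,
            ((χ (A * B) : ℂˣ) : ℂ)
          = ∑ A ∈ (Set.toFinite {A : Matrix (Fin m) (Fin m) F | A.rank = j}).toFinset,
              ((χ (A * B') : ℂˣ) : ℂ) := by
  classical
  have hcf : ∀ (j : ℕ) (A : Matrix (Fin m) (Fin m) F),
      A ∈ (Set.toFinite {A : Matrix (Fin m) (Fin m) F | A.rank = j}).toFinset ↔ A.rank = j :=
    fun j A => Set.Finite.mem_toFinset _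
  -- the map M ↦ ψM is injective
  have Ψinj : Function.Injective (RankDual.ψM (F := F) (m := m)) := by
    intro M M' hMM
    have h0 : M - M' = 0 := by
      apply RankDual.ND
      intro X
      have h1 : ((RankDual.ψM M X : ℂˣ) : ℂ) = ((RankDual.ψM M' X : ℂˣ) : ℂ) := by rw [hMM]
      rw [RankDual.ψM_coe, RankDual.ψM_coe] at h1
      have h3 : RankDual.φF F ((X * (M - M')).trace) * RankDual.φF F ((X * M').trace)
          = RankDual.φF F ((X * M).trace) := by
        rw [← AddChar.map_add_eq_mul]
        congr 1
        rw [Matrix.mul_sub, Matrix.trace_sub]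
        ring
      rw [h1] at h3
      exact mul_right_cancel₀ (RankDual.φF_ne_zero ((X * M').trace))
        (h3.trans (one_mul _).symm)
    rw [sub_eq_zero] at h0
    exact h0
  -- the choice map
  let rm : Matrix (Fin m) (Fin m) F → Matrix (Fin m) (Fin m) F :=
    fun M => (hχ (RankDual.ψM M)).choose
  have rm_spec : ∀ M X, RankDual.ψM M X = χ (X * rm M) :=
    fun M => (hχ (RankDual.ψM M)).choose_spec
  have rminj : Function.Injective rm := by
    intro M M' h
    apply Ψinj
    ext X
    rw [rm_spec M X, rm_spec M' X, h]
  have rmsurj : Function.Surjective rm := Finite.injective_iff_surjective.mp rminj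
  obtain ⟨M₀, hM₀⟩ := rmsurj 1
  have hrep : ∀ X : Matrix (Fin m) (Fin m) F,
      ((χ X : ℂˣ) : ℂ) = RankDual.φF F ((X * M₀).trace) := by
    intro X
    rw [← RankDual.ψM_coe M₀ X, rm_spec M₀ X, hM₀, mul_one]
  have hrinj : ∀ s s' : Matrix (Fin m) (Fin m) F,
      (∀ X, χ (X * s) = χ (X * s')) → s = s' := by
    intro s s' hss
    obtain ⟨M₁, hM₁⟩ := rmsurj s
    obtain ⟨M₂, hM₂⟩ := rmsurj s'
    have h12 : RankDual.ψM M₁ = RankDual.ψM M₂ := by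
      ext X
      rw [rm_spec M₁ X, rm_spec M₂ X, hM₁, hM₂, hss]
    rw [← hM₁, ← hM₂, Ψinj h12]
  -- M₀ is a unit
  have hM₀unit : IsUnit M₀ := by
    rw [Matrix.isUnit_iff_isUnit_det, isUnit_iff_ne_zero]
    intro hdet
    obtain ⟨v, hv, hvM⟩ := Matrix.exists_vecMul_eq_zero_iff.mpr hdet
    have hCM : (Matrix.of (fun (_ : Fin m) j => v j)) * M₀ = 0 := by
      ext i j
      have := congrFun hvM j
      simpa [Matrix.mul_apply, Matrix.vecMul, dotProduct] using this
    have hC0 : (Matrix.of (fun (_ : Fin m) j => v j)) = 0 := by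
      apply hrinj
      intro X
      apply Units.ext
      show ((χ (X * _) : ℂˣ) : ℂ) = ((χ (X * 0) : ℂˣ) : ℂ)
      rw [hrep, hrep, Matrix.mul_assoc, hCM]
      simp
    obtain ⟨j, hj⟩ : ∃ j, v j ≠ 0 := by
      by_contra hc
      push_neg at hc
      exact hv (funext hc)
    have := congrFun (congrFun hC0 ⟨0, hm⟩) j
    exact hj (by simpa using this)
  obtain ⟨u, hu⟩ : ∃ u : (Matrix (Fin m) (Fin m) F)ˣ, (u : Matrix (Fin m) (Fin m) F) = M₀ :=
    ⟨hM₀unit.unit, IsUnit.unit_spec hM₀unit⟩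
  have hκ0 : ((Fintype.card F : ℂ)) ^ (m * m) ≠ 0 :=
    pow_ne_zero _ (Nat.cast_ne_zero.mpr Fintype.card_ne_zero)
  -- rank is invariant under multiplication by units
  have hrankl : ∀ (W : (Matrix (Fin m) (Fin m) F)ˣ) (A : Matrix (Fin m) (Fin m) F),
      ((W : Matrix (Fin m) (Fin m) F) * A).rank = A.rank := fun W A =>
    Matrix.rank_mul_eq_right_of_isUnit_det _ _
      ((Matrix.isUnit_iff_isUnit_det _).mp W.isUnit)
  have hrankr : ∀ (W : (Matrix (Fin m) (Fin m) F)ˣ) (A : Matrix (Fin m) (Fin m) F),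
      (A * (W : Matrix (Fin m) (Fin m) F)).rank = A.rank := fun W A =>
    Matrix.rank_mul_eq_left_of_isUnit_det _ _
      ((Matrix.isUnit_iff_isUnit_det _).mp W.isUnit)
  -- inner orthogonality
  have inner : ∀ A C : Matrix (Fin m) (Fin m) F,
      (∑ X : Matrix (Fin m) (Fin m) F, ((χ (A * X) : ℂˣ) : ℂ) * ((χ (X * C) : ℂˣ) : ℂ))
        = if M₀ * A + C * M₀ = 0 then ((Fintype.card F : ℂ)) ^ (m * m) else 0 := by
    intro A C
    have hterm : ∀ X : Matrix (Fin m) (Fin m) F,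
        ((χ (A * X) : ℂˣ) : ℂ) * ((χ (X * C) : ℂˣ) : ℂ)
          = RankDual.φF F ((X * (M₀ * A + C * M₀)).trace) := by
      intro X
      rw [hrep, hrep, ← AddChar.map_add_eq_mul]
      congr 1
      rw [Matrix.mul_add, Matrix.trace_add]
      congr 1
      · rw [Matrix.mul_assoc A X M₀, Matrix.trace_mul_comm A (X * M₀), Matrix.mul_assoc]
      · rw [Matrix.mul_assoc]
    simp only [hterm]
    exact RankDual.orthogonality _
  -- the forward (invariance) lemma
  have FWD : ∀ (j : ℕ) (N N' : Matrix (Fin m) (Fin m) F), N.rank = N'.rank →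
      (∑ A ∈ (Set.toFinite {A : Matrix (Fin m) (Fin m) F | A.rank = j}).toFinset,
        ((χ (A * N) : ℂˣ) : ℂ))
      = ∑ A ∈ (Set.toFinite {A : Matrix (Fin m) (Fin m) F | A.rank = j}).toFinset,
        ((χ (A * N') : ℂˣ) : ℂ) := by
    intro j N N' hNN
    obtain ⟨U, V, hUV⟩ := RankDual.exists_units_eq N N' hNN
    have hQU : ∀ x : Matrix (Fin m) (Fin m) F,
        ((U⁻¹ : (Matrix (Fin m) (Fin m) F)ˣ) : Matrix (Fin m) (Fin m) F)
          * ((U : Matrix (Fin m) (Fin m) F) * x) = x := fun x =>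
      Units.inv_mul_cancel_left U x
    have hVMP : (V : Matrix (Fin m) (Fin m) F)
        * (M₀ * ((u⁻¹ * V⁻¹ * u : (Matrix (Fin m) (Fin m) F)ˣ) : Matrix (Fin m) (Fin m) F))
          = M₀ := by
      rw [← hu, ← Units.val_mul, ← Units.val_mul]
      refine congrArg _ ?_
      group
    have hterm : ∀ A : Matrix (Fin m) (Fin m) F,
        ((χ ((((u⁻¹ * V⁻¹ * u : (Matrix (Fin m) (Fin m) F)ˣ) : Matrix (Fin m) (Fin m) F) * A
            * ((U⁻¹ : (Matrix (Fin m) (Fin m) F)ˣ) : Matrix (Fin m) (Fin m) F)) * N') : ℂˣ) : ℂ)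
          = ((χ (A * N) : ℂˣ) : ℂ) := by
      intro A
      rw [hrep, hrep]
      congr 1
      rw [hUV]
      have e1 : (((u⁻¹ * V⁻¹ * u : (Matrix (Fin m) (Fin m) F)ˣ) : Matrix (Fin m) (Fin m) F) * A
            * ((U⁻¹ : (Matrix (Fin m) (Fin m) F)ˣ) : Matrix (Fin m) (Fin m) F))
            * ((U : Matrix (Fin m) (Fin m) F) * N * (V : Matrix (Fin m) (Fin m) F)) * M₀
          = ((u⁻¹ * V⁻¹ * u : (Matrix (Fin m) (Fin m) F)ˣ) : Matrix (Fin m) (Fin m) F)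
            * (A * (N * ((V : Matrix (Fin m) (Fin m) F) * M₀))) := by
        simp only [Matrix.mul_assoc, hQU]
      rw [e1, Matrix.trace_mul_comm]
      congr 1
      simp only [Matrix.mul_assoc]
      rw [show (V : Matrix (Fin m) (Fin m) F)
          * (M₀ * ((u⁻¹ * V⁻¹ * u : (Matrix (Fin m) (Fin m) F)ˣ) : Matrix (Fin m) (Fin m) F))
            = M₀ from hVMP]
    refine Finset.sum_nbij'
      (i := fun A => ((u⁻¹ * V⁻¹ * u : (Matrix (Fin m) (Fin m) F)ˣ) : Matrix (Fin m) (Fin m) F)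
        * A * ((U⁻¹ : (Matrix (Fin m) (Fin m) F)ˣ) : Matrix (Fin m) (Fin m) F))
      (j := fun A => (((u⁻¹ * V⁻¹ * u)⁻¹ : (Matrix (Fin m) (Fin m) F)ˣ)
        : Matrix (Fin m) (Fin m) F) * A * (U : Matrix (Fin m) (Fin m) F))
      ?_ ?_ ?_ ?_ ?_
    · intro A hA
      rw [hcf] at hA ⊢
      rw [hrankr, hrankl, hA]
    · intro A hA
      rw [hcf] at hA ⊢
      rw [hrankr, hrankl, hA]
    · intro A _
      simp only [Matrix.mul_assoc, Units.inv_mul_cancel_left, Units.inv_mul, mul_one]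
    · intro A _
      simp only [Matrix.mul_assoc, Units.mul_inv_cancel_left, Units.mul_inv, mul_one]
    · intro A _
      exact (hterm A).symm
  -- partition of the full sum by rank
  have partition : ∀ f : Matrix (Fin m) (Fin m) F → ℂ,
      ∑ X : Matrix (Fin m) (Fin m) F, f X
        = ∑ j ∈ Finset.range (m + 1),
            ∑ X ∈ (Set.toFinite {A : Matrix (Fin m) (Fin m) F | A.rank = j}).toFinset, f X := by
    intro f
    rw [← Finset.sum_fiberwise_of_maps_to (g := fun X : Matrix (Fin m) (Fin m) F => X.rank)
      (t := Finset.range (m + 1)) ?_ f]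
    · apply Finset.sum_congr rfl
      intro j _
      apply Finset.sum_congr ?_ fun _ _ => rfl
      ext A
      simp only [Finset.mem_filter, Finset.mem_univ, true_and, hcf]
    · intro X _
      rw [Finset.mem_range, Nat.lt_succ_iff]
      exact Matrix.rank_le_width X
  -- evaluation of the double sum
  have Eval : ∀ C : Matrix (Fin m) (Fin m) F,
      (∑ X : Matrix (Fin m) (Fin m) F,
        (∑ A ∈ (Set.toFinite {A : Matrix (Fin m) (Fin m) F | A.rank = B.rank}).toFinset,
          ((χ (A * X) : ℂˣ) : ℂ)) * ((χ (X * C) : ℂˣ) : ℂ))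
        = if C.rank = B.rank then ((Fintype.card F : ℂ)) ^ (m * m) else 0 := by
    intro C
    have expand : ∀ X : Matrix (Fin m) (Fin m) F,
        (∑ A ∈ (Set.toFinite {A : Matrix (Fin m) (Fin m) F | A.rank = B.rank}).toFinset,
          ((χ (A * X) : ℂˣ) : ℂ)) * ((χ (X * C) : ℂˣ) : ℂ)
        = ∑ A ∈ (Set.toFinite {A : Matrix (Fin m) (Fin m) F | A.rank = B.rank}).toFinset,
            ((χ (A * X) : ℂˣ) : ℂ) * ((χ (X * C) : ℂˣ) : ℂ) := fun X => Finset.sum_mul _ _ _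
    simp only [expand]
    rw [Finset.sum_comm]
    have hcond : ∀ A : Matrix (Fin m) (Fin m) F,
        (M₀ * A + C * M₀ = 0)
          ↔ A = -(((u⁻¹ : (Matrix (Fin m) (Fin m) F)ˣ) : Matrix (Fin m) (Fin m) F)
              * (C * M₀)) := by
      intro A
      rw [add_eq_zero_iff_eq_neg]
      constructor
      · intro h
        have : ((u⁻¹ : (Matrix (Fin m) (Fin m) F)ˣ) : Matrix (Fin m) (Fin m) F) * (M₀ * A)
            = A := by
          rw [← hu, Units.inv_mul_cancel_left]
        rw [← this, h, mul_neg]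
      · intro h
        rw [h, mul_neg, ← hu, Units.mul_inv_cancel_left]
    calc ∑ A ∈ (Set.toFinite {A : Matrix (Fin m) (Fin m) F | A.rank = B.rank}).toFinset,
          ∑ X : Matrix (Fin m) (Fin m) F, ((χ (A * X) : ℂˣ) : ℂ) * ((χ (X * C) : ℂˣ) : ℂ)
        = ∑ A ∈ (Set.toFinite {A : Matrix (Fin m) (Fin m) F | A.rank = B.rank}).toFinset,
            if A = -(((u⁻¹ : (Matrix (Fin m) (Fin m) F)ˣ) : Matrix (Fin m) (Fin m) F)
              * (C * M₀))
            then ((Fintype.card F : ℂ)) ^ (m * m) else 0 := by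
          refine Finset.sum_congr rfl fun A _ => ?_
          rw [inner A C]
          simp only [hcond A]
      _ = if (-(((u⁻¹ : (Matrix (Fin m) (Fin m) F)ˣ) : Matrix (Fin m) (Fin m) F) * (C * M₀)))
            ∈ (Set.toFinite {A : Matrix (Fin m) (Fin m) F | A.rank = B.rank}).toFinset
          then ((Fintype.card F : ℂ)) ^ (m * m) else 0 := Finset.sum_ite_eq' _ _ _
      _ = if C.rank = B.rank then ((Fintype.card F : ℂ)) ^ (m * m) else 0 := by
          have hA₀ : (-(((u⁻¹ : (Matrix (Fin m) (Fin m) F)ˣ) : Matrix (Fin m) (Fin m) F)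
              * (C * M₀))).rank = C.rank := by
            rw [show -(((u⁻¹ : (Matrix (Fin m) (Fin m) F)ˣ) : Matrix (Fin m) (Fin m) F)
                * (C * M₀))
              = ((-u⁻¹ : (Matrix (Fin m) (Fin m) F)ˣ) : Matrix (Fin m) (Fin m) F)
                * (C * M₀) by rw [Units.val_neg, neg_mul]]
            rw [hrankl, ← hu, hrankr]
          simp only [hcf, hA₀]
  -- conclude
  constructor
  · intro h j _
    exact FWD j B B' h
  · intro H
    have E1 := Eval B
    rw [if_pos rfl] at E1
    have E2 := Eval B'
    have E12 : (∑ X : Matrix (Fin m) (Fin m) F,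
        (∑ A ∈ (Set.toFinite {A : Matrix (Fin m) (Fin m) F | A.rank = B.rank}).toFinset,
          ((χ (A * X) : ℂˣ) : ℂ)) * ((χ (X * B) : ℂˣ) : ℂ))
        = ∑ X : Matrix (Fin m) (Fin m) F,
          (∑ A ∈ (Set.toFinite {A : Matrix (Fin m) (Fin m) F | A.rank = B.rank}).toFinset,
            ((χ (A * X) : ℂˣ) : ℂ)) * ((χ (X * B') : ℂˣ) : ℂ) := by
      rw [partition, partition]
      refine Finset.sum_congr rfl fun j hj => ?_
      have hjm : j ≤ m := Nat.lt_succ_iff.mp (Finset.mem_range.mp hj)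
      by_cases hne : ((Set.toFinite {A : Matrix (Fin m) (Fin m) F | A.rank = j}).toFinset).Nonempty
      · obtain ⟨X₀, hX₀⟩ := hne
        have hX₀r : X₀.rank = j := (hcf j X₀).mp hX₀
        have hconst : ∀ X ∈ (Set.toFinite {A : Matrix (Fin m) (Fin m) F | A.rank = j}).toFinset,
            (∑ A ∈ (Set.toFinite {A : Matrix (Fin m) (Fin m) F | A.rank = B.rank}).toFinset,
              ((χ (A * X) : ℂˣ) : ℂ))
            = ∑ A ∈ (Set.toFinite {A : Matrix (Fin m) (Fin m) F | A.rank = B.rank}).toFinset,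
              ((χ (A * X₀) : ℂˣ) : ℂ) := fun X hX =>
          FWD B.rank X X₀ (by rw [(hcf j X).mp hX, hX₀r])
        calc (∑ X ∈ (Set.toFinite {A : Matrix (Fin m) (Fin m) F | A.rank = j}).toFinset,
              (∑ A ∈ (Set.toFinite {A : Matrix (Fin m) (Fin m) F | A.rank = B.rank}).toFinset,
                ((χ (A * X) : ℂˣ) : ℂ)) * ((χ (X * B) : ℂˣ) : ℂ))
            = (∑ A ∈ (Set.toFinite {A : Matrix (Fin m) (Fin m) F | A.rank = B.rank}).toFinset,
                ((χ (A * X₀) : ℂˣ) : ℂ))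
              * ∑ X ∈ (Set.toFinite {A : Matrix (Fin m) (Fin m) F | A.rank = j}).toFinset,
                  ((χ (X * B) : ℂˣ) : ℂ) := by
              rw [Finset.mul_sum]
              exact Finset.sum_congr rfl fun X hX => by rw [hconst X hX]
          _ = (∑ A ∈ (Set.toFinite {A : Matrix (Fin m) (Fin m) F | A.rank = B.rank}).toFinset,
                ((χ (A * X₀) : ℂˣ) : ℂ))
              * ∑ X ∈ (Set.toFinite {A : Matrix (Fin m) (Fin m) F | A.rank = j}).toFinset,
                  ((χ (X * B') : ℂˣ) : ℂ) := by rw [H j hjm]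
          _ = ∑ X ∈ (Set.toFinite {A : Matrix (Fin m) (Fin m) F | A.rank = j}).toFinset,
              (∑ A ∈ (Set.toFinite {A : Matrix (Fin m) (Fin m) F | A.rank = B.rank}).toFinset,
                ((χ (A * X) : ℂˣ) : ℂ)) * ((χ (X * B') : ℂˣ) : ℂ) := by
              rw [Finset.mul_sum]
              exact Finset.sum_congr rfl fun X hX => by rw [hconst X hX]
      · rw [Finset.not_nonempty_iff_eq_empty] at hne
        rw [hne]
        simp
    have key : ((Fintype.card F : ℂ)) ^ (m * m)
        = if B'.rank = B.rank then ((Fintype.card F : ℂ)) ^ (m * m) else 0 :=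
      E1.symm.trans (E12.trans E2)
    by_cases hbb : B'.rank = B.rank
    · exact hbb.symm
    · rw [if_neg hbb] at key
      exact absurd key hκ0

end Main
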